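/- Let H ∈ (1/2,1), let K ∈ L²(0,∞), and suppose there exists c_Z ≠ 0 such that K(t) · t^{3/2−H} → c_Z as t → ∞. Then the covariance function C(s) = ∫₀^∞ K(u) K(u+s) du satisfies C(s) · s^{2−2H} → k_Z as s → ∞, where k_Z = c_Z² Γ(2−2H) Γ(H−1/2) / Γ(3/2−H); equivalently C(s) = k_Z s^{2H−2} (1+o(1)) as s → ∞ (long-range correlation). -/

import Mathlib

open MeasureTheory Real Set Filter Topology


lemma real_beta_interval {a b : ℝ} (ha : 0 < a) (hb : 0 < b) :
    ∫ x in (0:ℝ)..1, x ^ (a-1) * (1-x) ^ (b-1) =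
      Real.Gamma a * Real.Gamma b / Real.Gamma (a+b) := by
  have hab : 0 < a + b := by linarith
  have h := Complex.Gamma_mul_Gamma_eq_betaIntegral (s := (a:ℂ)) (t := (b:ℂ))
    (by simpa using ha) (by simpa using hb)
  have hB : Complex.betaIntegral a b =
      ((∫ x in (0:ℝ)..1, x ^ (a-1) * (1-x) ^ (b-1) : ℝ) : ℂ) := by
    rw [Complex.betaIntegral, ← intervalIntegral.integral_ofReal]
    refine intervalIntegral.integral_congr fun x hx => ?_
    rw [uIcc_of_le (by norm_num)] at hx
    have e1 : ((a:ℂ) - 1) = ((a - 1 : ℝ) : ℂ) := by push_cast; ring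
    have e2 : ((b:ℂ) - 1) = ((b - 1 : ℝ) : ℂ) := by push_cast; ring
    have e3 : (1 - (x:ℂ)) = ((1 - x : ℝ) : ℂ) := by push_cast; ring
    rw [e1, e2, e3, ← Complex.ofReal_cpow hx.1,
      ← Complex.ofReal_cpow (by simp [hx.2] : (0:ℝ) ≤ 1 - x), ← Complex.ofReal_mul]
  rw [hB, ← Complex.ofReal_add, Complex.Gamma_ofReal, Complex.Gamma_ofReal,
    Complex.Gamma_ofReal, ← Complex.ofReal_mul, ← Complex.ofReal_mul] at h
  have := Complex.ofReal_injective h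
  have hG : Real.Gamma (a+b) ≠ 0 := (Real.Gamma_pos_of_pos hab).ne'
  field_simp
  linarith [this]

lemma beta_integrand_integrable {a b : ℝ} (ha : 0 < a) (hb : 0 < b) :
    IntegrableOn (fun v : ℝ => v ^ (a-1) * (1+v) ^ (-(a+b))) (Ioi 0) := by
  have hmeas : Measurable (fun v : ℝ => v ^ (a-1) * (1+v) ^ (-(a+b))) := by
    fun_prop
  have h1 : IntegrableOn (fun v : ℝ => v ^ (a-1) * (1+v) ^ (-(a+b))) (Ioc 0 1) := by
    have hint : IntegrableOn (fun v : ℝ => v ^ (a-1)) (Ioc 0 1) := by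
      have := intervalIntegral.intervalIntegrable_rpow' (a := 0) (b := 1)
        (by linarith : (-1:ℝ) < a - 1)
      simpa [intervalIntegrable_iff, uIoc_of_le (by norm_num : (0:ℝ) ≤ 1)] using this
    refine Integrable.mono hint (hmeas.aestronglyMeasurable.restrict) ?_
    filter_upwards [ae_restrict_mem measurableSet_Ioc] with v hv
    have hv0 : (0:ℝ) < v := hv.1
    rw [norm_mul, norm_of_nonneg (rpow_nonneg hv0.le _),
      norm_of_nonneg (rpow_nonneg (by linarith : (0:ℝ) ≤ 1+v) _)]
    have : (1+v) ^ (-(a+b)) ≤ 1 :=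
      rpow_le_one_of_one_le_of_nonpos (by linarith) (by linarith)
    nlinarith [rpow_nonneg hv0.le (a-1), rpow_nonneg (by linarith : (0:ℝ) ≤ 1+v) (-(a+b))]
  have h2 : IntegrableOn (fun v : ℝ => v ^ (a-1) * (1+v) ^ (-(a+b))) (Ioi 1) := by
    have hint : IntegrableOn (fun v : ℝ => v ^ (-1-b)) (Ioi 1) :=
      integrableOn_Ioi_rpow_of_lt (by linarith) one_pos
    refine Integrable.mono hint (hmeas.aestronglyMeasurable.restrict) ?_
    filter_upwards [ae_restrict_mem measurableSet_Ioi] with v hv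
    have hv1 : (1:ℝ) < v := hv
    have hv0 : (0:ℝ) < v := by linarith
    rw [norm_mul, norm_of_nonneg (rpow_nonneg hv0.le _),
      norm_of_nonneg (rpow_nonneg (by linarith : (0:ℝ) ≤ 1+v) _),
      norm_of_nonneg (rpow_nonneg hv0.le _)]
    have h3 : (1+v) ^ (-(a+b)) ≤ v ^ (-(a+b)) :=
      rpow_le_rpow_of_nonpos hv0 (by linarith) (by linarith)
    calc v ^ (a-1) * (1+v) ^ (-(a+b)) ≤ v ^ (a-1) * v ^ (-(a+b)) := by
          exact mul_le_mul_of_nonneg_left h3 (rpow_nonneg hv0.le _)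
      _ = v ^ (-1-b) := by rw [← Real.rpow_add hv0]; ring_nf
  have : Ioi (0:ℝ) = Ioc 0 1 ∪ Ioi 1 := by
    rw [Ioc_union_Ioi_eq_Ioi]; norm_num
  rw [this]
  exact h1.union h2

lemma beta_Ioi {a b : ℝ} (ha : 0 < a) (hb : 0 < b) :
    ∫ v in Ioi (0:ℝ), v ^ (a-1) * (1+v) ^ (-(a+b)) =
      Real.Gamma a * Real.Gamma b / Real.Gamma (a+b) := by
  have himg : (fun x : ℝ => x / (1-x)) '' Ioo 0 1 = Ioi 0 := by
    ext v
    constructor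
    · rintro ⟨x, ⟨hx0, hx1⟩, rfl⟩
      exact div_pos hx0 (by linarith)
    · intro hv
      have hv' : (0:ℝ) < v := hv
      have h1v : (0:ℝ) < 1 + v := by linarith
      refine ⟨v / (1+v), ⟨div_pos hv' h1v, by rw [div_lt_one h1v]; linarith⟩, ?_⟩
      field_simp
      ring
  have hderiv : ∀ x ∈ Ioo (0:ℝ) 1, HasDerivWithinAt (fun x : ℝ => x / (1-x))
      (((1-x)^2)⁻¹) (Ioo 0 1) x := by
    intro x hx
    have h1x : (1:ℝ) - x ≠ 0 := ne_of_gt (by linarith [hx.2])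
    have := (hasDerivAt_id x).div ((hasDerivAt_id x).const_sub 1) h1x
    have e : ((1-x)^2)⁻¹ = (1 * (1 - id x) - id x * -1) / (1 - id x) ^ 2 := by
      simp only [id_eq]
      rw [inv_eq_one_div]
      congr 1
      ring
    rw [e]
    exact this.hasDerivWithinAt
  have hinj : InjOn (fun x : ℝ => x / (1-x)) (Ioo 0 1) := by
    intro x hx y hy hxy
    have h1x : (1:ℝ) - x ≠ 0 := ne_of_gt (by linarith [hx.2])
    have h1y : (1:ℝ) - y ≠ 0 := ne_of_gt (by linarith [hy.2])
    field_simp at hxy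
    nlinarith [hxy]
  have key := integral_image_eq_integral_abs_deriv_smul measurableSet_Ioo hderiv hinj
    (fun v : ℝ => v ^ (a-1) * (1+v) ^ (-(a+b)))
  rw [himg] at key
  have hcongr : ∀ x ∈ Ioo (0:ℝ) 1,
      |((1-x)^2)⁻¹| • ((x / (1-x)) ^ (a-1) * (1 + x / (1-x)) ^ (-(a+b)))
        = x ^ (a-1) * (1-x) ^ (b-1) := by
    intro x hx
    have h1x : (0:ℝ) < 1 - x := by linarith [hx.2]
    have hx0 : (0:ℝ) < x := hx.1
    have e1 : (1:ℝ) + x / (1-x) = (1-x)⁻¹ := by field_simp; ring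
    have e2 : ((1-x)⁻¹ : ℝ) ^ (-(a+b)) = (1-x) ^ (a+b) := by
      rw [Real.inv_rpow h1x.le, ← Real.rpow_neg h1x.le, neg_neg]
    have e3 : (((1-x)^2)⁻¹ : ℝ) = (1-x) ^ (-2:ℝ) := by
      rw [← Real.rpow_natCast (1-x) 2, ← Real.rpow_neg h1x.le]
      norm_num
    rw [smul_eq_mul, e1, abs_of_pos (by positivity), e2, e3,
      Real.div_rpow hx0.le h1x.le, div_eq_mul_inv, ← Real.rpow_neg h1x.le]
    calc (1-x) ^ (-2:ℝ) * (x ^ (a-1) * (1-x) ^ (-(a-1)) * (1-x) ^ (a+b))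
        = x ^ (a-1) * ((1-x) ^ (-2:ℝ) * (1-x) ^ (-(a-1)) * (1-x) ^ (a+b)) := by ring
      _ = x ^ (a-1) * (1-x) ^ (b-1) := by
          rw [← Real.rpow_add h1x, ← Real.rpow_add h1x]
          congr 1
          ring
  rw [key, setIntegral_congr_fun measurableSet_Ioo hcongr, ← integral_Ioc_eq_integral_Ioo,
    ← intervalIntegral.integral_of_le (by norm_num : (0:ℝ) ≤ 1), real_beta_interval ha hb]


-- helper QMP lemmas
lemma qmp_restrict_Ioi {f : ℝ → ℝ} (hf : Measurable f)
    (hnull : ∀ A : Set ℝ, volume A = 0 → volume (f ⁻¹' A) = 0)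
    (hmaps : MapsTo f (Ioi 0) (Ioi 0)) :
    Measure.QuasiMeasurePreserving f (volume.restrict (Ioi 0)) (volume.restrict (Ioi 0)) := by
  refine ⟨hf, Measure.AbsolutelyContinuous.mk fun A hA h0 => ?_⟩
  rw [Measure.restrict_apply hA] at h0
  rw [Measure.map_apply hf hA, Measure.restrict_apply (hf hA)]
  refine measure_mono_null (fun x hx => ?_) (hnull _ h0)
  exact ⟨hx.1, hmaps hx.2⟩

lemma qmp_mul_Ioi {s : ℝ} (hs : 0 < s) :
    Measure.QuasiMeasurePreserving (fun v : ℝ => s * v)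
      (volume.restrict (Ioi 0)) (volume.restrict (Ioi 0)) := by
  refine qmp_restrict_Ioi (measurable_const_mul s) (fun A hA => ?_) (fun x hx => ?_)
  · rw [Real.volume_preimage_mul_left hs.ne' A, hA, mul_zero]
  · exact mul_pos hs hx

lemma qmp_add_Ioi {s : ℝ} (hs : 0 ≤ s) :
    Measure.QuasiMeasurePreserving (fun v : ℝ => v + s)
      (volume.restrict (Ioi 0)) (volume.restrict (Ioi 0)) := by
  refine qmp_restrict_Ioi (measurable_add_const s) (fun A hA => ?_) (fun x hx => ?_)
  · have := (measurePreserving_add_right volume s).quasiMeasurePreserving.preimage_null hA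
    exact this
  · have : (0:ℝ) < x := hx
    exact add_pos_of_pos_of_nonneg this hs

lemma map_add_restrict_Ioi (s : ℝ) :
    Measure.map (fun u : ℝ => u + s) (volume.restrict (Ioi 0)) = volume.restrict (Ioi s) := by
  have h := Measure.restrict_map (μ := volume) (measurable_add_const s) measurableSet_Ioi (s := Ioi s)
  have hpre : (fun u : ℝ => u + s) ⁻¹' Ioi s = Ioi 0 := by
    ext x; simp [mem_Ioi]
  rw [hpre] at h
  rw [← h, map_add_right_eq_self volume s]

lemma shift_memLp {K : ℝ → ℝ} (hK2 : MemLp K 2 (volume.restrict (Set.Ioi 0)))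
    {s : ℝ} (hs : 0 ≤ s) :
    MemLp (fun u : ℝ => K (u + s)) 2 (volume.restrict (Ioi 0)) := by
  have h1 : MemLp K 2 (volume.restrict (Ioi s)) :=
    hK2.mono_measure (Measure.restrict_mono (Ioi_subset_Ioi hs) le_rfl)
  have hmp : MeasurePreserving (fun u : ℝ => u + s)
      (volume.restrict (Ioi 0)) (volume.restrict (Ioi s)) :=
    ⟨measurable_add_const s, map_add_restrict_Ioi s⟩
  exact h1.comp_measurePreserving hmp

lemma prod_integrable {K : ℝ → ℝ} (hK2 : MemLp K 2 (volume.restrict (Set.Ioi 0)))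
    {s : ℝ} (hs : 0 ≤ s) :
    IntegrableOn (fun u : ℝ => K u * K (u + s)) (Ioi 0) := by
  have := (shift_memLp hK2 hs).smul (p := 2) (q := 2) (r := 1) hK2
  rw [IntegrableOn, ← memLp_one_iff_integrable]
  exact this


theorem general_kernel_long_range (H : ℝ) (hH : H ∈ Set.Ioo (1/2 : ℝ) 1)
    (K : ℝ → ℝ) (hK2 : MemLp K 2 (volume.restrict (Set.Ioi 0)))
    (cZ : ℝ) (hcZ : cZ ≠ 0)
    (hKasym : Tendsto (fun t : ℝ => K t * t ^ (3/2 - H)) atTop (𝓝 cZ)) :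
    Tendsto (fun s : ℝ => (∫ u in Set.Ioi (0:ℝ), K u * K (u + s)) * s ^ (2 - 2 * H))
      atTop
      (𝓝 (cZ ^ 2 * Real.Gamma (2 - 2 * H) * Real.Gamma (H - 1/2) /
        Real.Gamma (3/2 - H))) := by
  obtain ⟨hH1, hH2⟩ := hH
  set C : ℝ := |cZ| + 1 with hC
  have hCpos : 0 < C := by positivity
  -- obtain M
  have hev : ∀ᶠ u in atTop, |K u * u ^ (3/2 - H) - cZ| < 1 := by
    have := Metric.tendsto_nhds.mp hKasym 1 one_pos
    simpa [Real.dist_eq] using this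
  obtain ⟨M₀, hM₀⟩ := eventually_atTop.mp hev
  set M : ℝ := max M₀ 1 with hMdef
  have hM1 : (1:ℝ) ≤ M := le_max_right _ _
  have hMpos : (0:ℝ) < M := lt_of_lt_of_le one_pos hM1
  have hKbd : ∀ u : ℝ, M ≤ u → |K u| ≤ C * u ^ (H - 3/2) := by
    intro u hu
    have hu0 : (0:ℝ) < u := lt_of_lt_of_le hMpos hu
    have h1 : |K u * u ^ (3/2 - H)| ≤ C := by
      have := hM₀ u (le_trans (le_max_left _ _) hu)
      have h0 : |K u * u ^ (3/2 - H)| - |cZ| ≤ |K u * u ^ (3/2 - H) - cZ| :=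
        abs_sub_abs_le_abs_sub _ _
      rw [hC]; linarith
    have hpow : (0:ℝ) < u ^ (3/2 - H) := rpow_pos_of_pos hu0 _
    have h2 : |K u| * u ^ (3/2 - H) ≤ C := by
      rwa [abs_mul, abs_of_pos hpow] at h1
    have h3 : u ^ (3/2 - H) * u ^ (H - 3/2) = 1 := by
      rw [← Real.rpow_add hu0, show (3/2 - H) + (H - 3/2) = 0 by ring, Real.rpow_zero]
    calc |K u| = |K u| * (u ^ (3/2 - H) * u ^ (H - 3/2)) := by rw [h3, mul_one]
      _ = (|K u| * u ^ (3/2 - H)) * u ^ (H - 3/2) := by ring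
      _ ≤ C * u ^ (H - 3/2) :=
          mul_le_mul_of_nonneg_right h2 (rpow_nonneg hu0.le _)
  have hKmeas : AEStronglyMeasurable K (volume.restrict (Ioi 0)) := hK2.aestronglyMeasurable
  have hbeta_int : IntegrableOn (fun v : ℝ => v ^ (H-3/2) * (1+v) ^ (H-3/2)) (Ioi 0) := by
    have h := beta_integrand_integrable (a := H - 1/2) (b := 2 - 2*H) (by linarith) (by linarith)
    have he1 : (fun v : ℝ => v ^ (H-1/2-1) * (1+v) ^ (-(H-1/2+(2-2*H))))
        = fun v : ℝ => v ^ (H-3/2) * (1+v) ^ (H-3/2) := by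
      funext v
      rw [show H-1/2-1 = H-3/2 by ring, show -(H-1/2+(2-2*H)) = H-3/2 by ring]
    rwa [he1] at h
  have hbeta_val : ∫ v in Ioi (0:ℝ), v ^ (H-3/2) * (1+v) ^ (H-3/2)
      = Real.Gamma (H-1/2) * Real.Gamma (2-2*H) / Real.Gamma (3/2-H) := by
    have h := beta_Ioi (a := H - 1/2) (b := 2 - 2*H) (by linarith) (by linarith)
    have he1 : (fun v : ℝ => v ^ (H-1/2-1) * (1+v) ^ (-(H-1/2+(2-2*H))))
        = fun v : ℝ => v ^ (H-3/2) * (1+v) ^ (H-3/2) := by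
      funext v
      rw [show H-1/2-1 = H-3/2 by ring, show -(H-1/2+(2-2*H)) = H-3/2 by ring]
    rw [show Real.Gamma (H - 1/2 + (2 - 2*H)) = Real.Gamma (3/2 - H) by norm_num; ring_nf] at h
    rwa [he1] at h
  set F : ℝ → ℝ → ℝ :=
    fun s => (Ioi (M/s)).indicator (fun v => s ^ (3-2*H) * (K (s*v) * K (s*v+s))) with hF
  have hFmeas : ∀ s : ℝ, 0 < s → AEStronglyMeasurable (F s) (volume.restrict (Ioi 0)) := by
    intro s hs
    have m1 : AEStronglyMeasurable (fun v : ℝ => K (s*v)) (volume.restrict (Ioi 0)) :=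
      hKmeas.comp_quasiMeasurePreserving (qmp_mul_Ioi hs)
    have m2 : AEStronglyMeasurable (fun v : ℝ => K (s*v+s)) (volume.restrict (Ioi 0)) :=
      hKmeas.comp_quasiMeasurePreserving ((qmp_add_Ioi hs.le).comp (qmp_mul_Ioi hs))
    exact (((m1.mul m2).const_mul _).indicator measurableSet_Ioi)
  have h_bound : ∀ᶠ s : ℝ in atTop, ∀ᵐ v ∂(volume.restrict (Ioi 0)),
      ‖F s v‖ ≤ C^2 * (v ^ (H-3/2) * (1+v) ^ (H-3/2)) := by
    filter_upwards [eventually_ge_atTop M] with s hsM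
    have hs0 : (0:ℝ) < s := lt_of_lt_of_le hMpos hsM
    filter_upwards [ae_restrict_mem measurableSet_Ioi] with v hv
    have hv0 : (0:ℝ) < v := hv
    by_cases hvM : v ∈ Ioi (M/s)
    · rw [hF]
      simp only [indicator_of_mem hvM]
      have hsv : M < s * v := by
        have := (div_lt_iff₀ hs0).mp hvM
        linarith [this]
      have hsvs : M ≤ s * v + s := by nlinarith
      have b1 : |K (s*v)| ≤ C * (s*v) ^ (H-3/2) := hKbd _ hsv.le
      have b2 : |K (s*v+s)| ≤ C * (s*v+s) ^ (H-3/2) := hKbd _ hsvs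
      have hsv0 : (0:ℝ) < s * v := by positivity
      have hsvs0 : (0:ℝ) < s * v + s := by positivity
      have key : s ^ (3-2*H) * ((s*v) ^ (H-3/2) * (s*v+s) ^ (H-3/2))
          = v ^ (H-3/2) * (1+v) ^ (H-3/2) := by
        rw [show s*v+s = s*(1+v) by ring, Real.mul_rpow hs0.le hv0.le,
          Real.mul_rpow hs0.le (by linarith : (0:ℝ) ≤ 1+v),
          show s ^ (3-2*H) * (s ^ (H-3/2) * v ^ (H-3/2) * (s ^ (H-3/2) * (1+v) ^ (H-3/2)))
            = (s ^ (3-2*H) * s ^ (H-3/2) * s ^ (H-3/2)) * (v ^ (H-3/2) * (1+v) ^ (H-3/2)) by ring,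
          ← Real.rpow_add hs0, ← Real.rpow_add hs0,
          show 3-2*H + (H-3/2) + (H-3/2) = 0 by ring, Real.rpow_zero, one_mul]
      calc ‖s ^ (3-2*H) * (K (s*v) * K (s*v+s))‖
          = s ^ (3-2*H) * (|K (s*v)| * |K (s*v+s)|) := by
            rw [norm_mul, norm_mul, norm_of_nonneg (rpow_nonneg hs0.le _)]
            rfl
        _ ≤ s ^ (3-2*H) * ((C * (s*v) ^ (H-3/2)) * (C * (s*v+s) ^ (H-3/2))) := by
            refine mul_le_mul_of_nonneg_left ?_ (rpow_nonneg hs0.le _)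
            exact mul_le_mul b1 b2 (abs_nonneg _)
              (by positivity)
        _ = C^2 * (s ^ (3-2*H) * ((s*v) ^ (H-3/2) * (s*v+s) ^ (H-3/2))) := by ring
        _ = C^2 * (v ^ (H-3/2) * (1+v) ^ (H-3/2)) := by rw [key]
    · rw [hF]
      simp only [indicator_of_notMem hvM, norm_zero]
      positivity
  have h_lim : ∀ᵐ v ∂(volume.restrict (Ioi 0)),
      Tendsto (fun s => F s v) atTop (𝓝 (cZ^2 * (v ^ (H-3/2) * (1+v) ^ (H-3/2)))) := by
    filter_upwards [ae_restrict_mem measurableSet_Ioi] with v hv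
    have hv0 : (0:ℝ) < v := hv
    have hv1 : (0:ℝ) < 1 + v := by linarith
    have t1 : Tendsto (fun s : ℝ => K (s*v) * (s*v) ^ (3/2-H)) atTop (𝓝 cZ) :=
      hKasym.comp (tendsto_id.atTop_mul_const hv0)
    have t2 : Tendsto (fun s : ℝ => K (s*(1+v)) * (s*(1+v)) ^ (3/2-H)) atTop (𝓝 cZ) :=
      hKasym.comp (tendsto_id.atTop_mul_const hv1)
    have t3 : Tendsto (fun s : ℝ =>
        (K (s*v) * (s*v) ^ (3/2-H)) * (K (s*(1+v)) * (s*(1+v)) ^ (3/2-H))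
          * (v ^ (H-3/2) * (1+v) ^ (H-3/2))) atTop
        (𝓝 ((cZ * cZ) * (v ^ (H-3/2) * (1+v) ^ (H-3/2)))) :=
      (t1.mul t2).mul_const _
    rw [show (cZ * cZ) * (v ^ (H-3/2) * (1+v) ^ (H-3/2))
      = cZ^2 * (v ^ (H-3/2) * (1+v) ^ (H-3/2)) by ring] at t3
    refine t3.congr' ?_
    filter_upwards [eventually_gt_atTop (M/v), eventually_gt_atTop 0] with s hsv hs0
    have hvmem : v ∈ Ioi (M/s) := by
      rw [mem_Ioi, div_lt_iff₀ hs0]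
      rw [div_lt_iff₀ hv0] at hsv
      nlinarith
    rw [hF]
    simp only [indicator_of_mem hvmem]
    have hsv0 : (0:ℝ) < s * v := by positivity
    have hsv1 : (0:ℝ) < s * (1+v) := by positivity
    have e0 : s * v + s = s * (1+v) := by ring
    rw [e0]
    have key : (s*v) ^ (3/2-H) * (s*(1+v)) ^ (3/2-H) * (v ^ (H-3/2) * (1+v) ^ (H-3/2))
        = s ^ (3-2*H) := by
      rw [Real.mul_rpow hs0.le hv0.le, Real.mul_rpow hs0.le hv1.le,
        show s ^ (3/2-H) * v ^ (3/2-H) * (s ^ (3/2-H) * (1+v) ^ (3/2-H))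
            * (v ^ (H-3/2) * (1+v) ^ (H-3/2))
          = (s ^ (3/2-H) * s ^ (3/2-H)) * (v ^ (3/2-H) * v ^ (H-3/2))
            * ((1+v) ^ (3/2-H) * (1+v) ^ (H-3/2)) by ring,
        ← Real.rpow_add hs0, ← Real.rpow_add hv0, ← Real.rpow_add hv1,
        show (3/2-H) + (3/2-H) = 3-2*H by ring,
        show (3/2-H) + (H-3/2) = 0 by ring, Real.rpow_zero]
      simp
    calc (K (s*v) * (s*v) ^ (3/2-H)) * (K (s*(1+v)) * (s*(1+v)) ^ (3/2-H))
          * (v ^ (H-3/2) * (1+v) ^ (H-3/2))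
        = ((s*v) ^ (3/2-H) * (s*(1+v)) ^ (3/2-H) * (v ^ (H-3/2) * (1+v) ^ (H-3/2)))
            * (K (s*v) * K (s*(1+v))) := by ring
      _ = s ^ (3-2*H) * (K (s*v) * K (s*(1+v))) := by rw [key]
  have T2 : Tendsto (fun s : ℝ => ∫ v in Ioi (0:ℝ), F s v) atTop
      (𝓝 (∫ v in Ioi (0:ℝ), cZ^2 * (v ^ (H-3/2) * (1+v) ^ (H-3/2)))) := by
    refine tendsto_integral_filter_of_dominated_convergence
      (fun v => C^2 * (v ^ (H-3/2) * (1+v) ^ (H-3/2))) ?_ h_bound ?_ h_lim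
    · filter_upwards [eventually_gt_atTop 0] with s hs using hFmeas s hs
    · exact hbeta_int.const_mul _
  have hKint : IntegrableOn K (Ioc 0 M) := by
    haveI : IsFiniteMeasure (volume.restrict (Ioc (0:ℝ) M)) := by
      constructor
      rw [Measure.restrict_apply_univ, Real.volume_Ioc]
      exact ENNReal.ofReal_lt_top
    exact (hK2.mono_measure (Measure.restrict_mono Ioc_subset_Ioi_self le_rfl)).integrable
      one_le_two
  set D : ℝ := (∫ u in Ioc (0:ℝ) M, |K u|) * C with hD
  have T1 : Tendsto (fun s : ℝ => (∫ u in Ioc (0:ℝ) M, K u * K (u+s)) * s ^ (2-2*H)) atTop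
      (𝓝 0) := by
    apply squeeze_zero_norm' (a := fun s : ℝ => D * s ^ (1/2 - H))
    · filter_upwards [eventually_ge_atTop M] with s hsM
      have hs0 : (0:ℝ) < s := lt_of_lt_of_le hMpos hsM
      have hint1 : IntegrableOn (fun u => K u * K (u+s)) (Ioc 0 M) :=
        (prod_integrable hK2 hs0.le).mono_set Ioc_subset_Ioi_self
      have h2 : ∫ u in Ioc (0:ℝ) M, ‖K u * K (u+s)‖
          ≤ ∫ u in Ioc (0:ℝ) M, |K u| * (C * s ^ (H-3/2)) := by
        refine setIntegral_mono_on hint1.norm (hKint.abs.mul_const _) measurableSet_Ioc ?_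
        intro u hu
        rw [norm_mul]
        have hb : |K (u+s)| ≤ C * s ^ (H-3/2) := by
          have hMus : M ≤ u + s := by linarith [hu.1]
          calc |K (u+s)| ≤ C * (u+s) ^ (H-3/2) := hKbd _ hMus
            _ ≤ C * s ^ (H-3/2) := by
                refine mul_le_mul_of_nonneg_left ?_ hCpos.le
                exact rpow_le_rpow_of_nonpos hs0 (by linarith [hu.1]) (by linarith)
        calc ‖K u‖ * ‖K (u+s)‖ ≤ ‖K u‖ * (C * s ^ (H-3/2)) :=
              mul_le_mul_of_nonneg_left hb (norm_nonneg _)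
          _ = |K u| * (C * s ^ (H-3/2)) := by rw [Real.norm_eq_abs]
      have h3 : ∫ u in Ioc (0:ℝ) M, |K u| * (C * s ^ (H-3/2))
          = D * s ^ (H-3/2) := by
        rw [integral_mul_const, hD]; ring
      have hnn : (0:ℝ) ≤ s ^ (2-2*H) := rpow_nonneg hs0.le _
      calc ‖(∫ u in Ioc (0:ℝ) M, K u * K (u+s)) * s ^ (2-2*H)‖
          = ‖∫ u in Ioc (0:ℝ) M, K u * K (u+s)‖ * s ^ (2-2*H) := by
            rw [norm_mul, norm_of_nonneg hnn]
        _ ≤ (D * s ^ (H-3/2)) * s ^ (2-2*H) := by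
            refine mul_le_mul_of_nonneg_right ?_ hnn
            refine le_trans (norm_integral_le_integral_norm _) (le_trans h2 (le_of_eq h3))
        _ = D * s ^ (1/2 - H) := by
            rw [mul_assoc, ← Real.rpow_add hs0, show (H-3/2) + (2-2*H) = 1/2 - H by ring]
    · have h := tendsto_rpow_neg_atTop (y := H - 1/2) (by linarith)
      rw [show -(H - 1/2) = 1/2 - H by ring] at h
      simpa using h.const_mul D
  have hlimval : ∫ v in Ioi (0:ℝ), cZ^2 * (v ^ (H-3/2) * (1+v) ^ (H-3/2))
      = cZ ^ 2 * Real.Gamma (2 - 2*H) * Real.Gamma (H - 1/2) / Real.Gamma (3/2 - H) := by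
    rw [integral_const_mul, hbeta_val]; ring
  have Tsum := T1.add T2
  rw [zero_add, hlimval] at Tsum
  have heq : (fun s : ℝ => (∫ u in Ioc (0:ℝ) M, K u * K (u+s)) * s ^ (2-2*H)
        + ∫ v in Ioi (0:ℝ), F s v)
      =ᶠ[atTop] fun s : ℝ => (∫ u in Set.Ioi (0:ℝ), K u * K (u + s)) * s ^ (2 - 2 * H) := by
    filter_upwards [eventually_ge_atTop M] with s hsM
    have hs0 : (0:ℝ) < s := lt_of_lt_of_le hMpos hsM
    have hsplit : ∫ u in Ioi (0:ℝ), K u * K (u+s)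
        = (∫ u in Ioc (0:ℝ) M, K u * K (u+s)) + ∫ u in Ioi M, K u * K (u+s) := by
      rw [← Ioc_union_Ioi_eq_Ioi hMpos.le]
      refine setIntegral_union ?_ measurableSet_Ioi
        ((prod_integrable hK2 hs0.le).mono_set Ioc_subset_Ioi_self)
        ((prod_integrable hK2 hs0.le).mono_set (Ioi_subset_Ioi hMpos.le))
      exact Ioc_disjoint_Ioi le_rfl
    have hsub : ∫ v in Ioi (0:ℝ), F s v
        = s ^ (2-2*H) * ∫ u in Ioi M, K u * K (u+s) := by
      rw [hF]
      rw [integral_indicator measurableSet_Ioi,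
        Measure.restrict_restrict measurableSet_Ioi, Set.Ioi_inter_Ioi,
        max_eq_left (by positivity : (0:ℝ) ≤ M/s)]
      rw [integral_const_mul]
      have hcomp := integral_comp_mul_left_Ioi (fun u => K u * K (u+s)) (M/s) hs0
      rw [mul_div_cancel₀ _ hs0.ne'] at hcomp
      rw [hcomp, smul_eq_mul, ← mul_assoc, ← Real.rpow_neg_one s, ← Real.rpow_add hs0,
        show (3-2*H) + (-1) = 2-2*H by ring]
    rw [hsplit, hsub]
    ring
  exact Tsum.congr' heq
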